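/- arXiv:1704.07235 — 2 statements merged into one kernel-verified Lean document; each statement's English description precedes it below -/
import Mathlib

section
/- For the comonotonic sum of any two continuous random variables X and Y (i.e., Y = g(X) with g nondecreasing and continuous), VaR is additive: VaR_q(X + Y) = VaR_q(X) + VaR_q(Y) for all q ∈ (0,1). -/
open MeasureTheory Filter Topology

/-- Value-at-Risk at level `q`: the left `q`-quantile
`VaR_q(Z) = inf {z : P(Z ≤ z) ≥ q}`. -/
noncomputable def VaR {Ω : Type*} [MeasurableSpace Ω] (P : Measure Ω) (q : ℝ)
    (Z : Ω → ℝ) : ℝ :=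
  sInf {z : ℝ | q ≤ (P {ω | Z ω ≤ z}).toReal}

lemma VaR_comp {Ω : Type*} [MeasurableSpace Ω] (P : Measure Ω) [IsProbabilityMeasure P]
    (X : Ω → ℝ) (hX : Measurable X)
    (hXcont : Continuous fun x : ℝ => (P {ω | X ω ≤ x}).toReal)
    {q : ℝ} (hq0 : 0 < q) (hq1 : q < 1)
    (h : ℝ → ℝ) (hh : Monotone h) (hhc : Continuous h) :
    VaR P q (fun ω => h (X ω)) = h (VaR P q X) := by
  set F : ℝ → ℝ := fun x => (P {ω | X ω ≤ x}).toReal with hFdef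
  have hFmono : Monotone F := fun a b hab =>
    ENNReal.toReal_mono (measure_ne_top P _) (measure_mono fun ω hw => le_trans hw hab)
  set S : Set ℝ := {z | q ≤ F z} with hSdef
  -- S is nonempty
  have hSne : S.Nonempty := by
    have hmon : Monotone fun n : ℕ => {ω | X ω ≤ (n:ℝ)} :=
      fun a b hab ω (hw : X _ ≤ _) => le_trans hw (by exact_mod_cast hab)
    have hU : (⋃ n : ℕ, {ω | X ω ≤ (n:ℝ)}) = Set.univ := by
      ext ω
      simp only [Set.mem_iUnion, Set.mem_univ, iff_true, Set.mem_setOf_eq]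
      exact exists_nat_ge (X ω)
    have h1 : Tendsto (fun n : ℕ => P {ω | X ω ≤ (n:ℝ)}) atTop (nhds 1) := by
      have := tendsto_measure_iUnion_atTop (μ := P) hmon
      rwa [hU, measure_univ] at this
    have h2 : Tendsto (fun n : ℕ => F (n:ℝ)) atTop (nhds 1) := by
      have := (ENNReal.tendsto_toReal (by norm_num : (1:ENNReal) ≠ ⊤)).comp h1
      simp at this; exact this
    have := (h2.eventually (eventually_ge_nhds hq1)).exists
    obtain ⟨n, hn⟩ := this
    exact ⟨(n:ℝ), hn⟩
  -- S is bounded below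
  have hSbd : BddBelow S := by
    have hanti : Antitone fun n : ℕ => {ω | X ω ≤ -(n:ℝ)} :=
      fun a b hab ω (hw : X _ ≤ _) => le_trans hw (by simp; exact_mod_cast hab)
    have hI : (⋂ n : ℕ, {ω | X ω ≤ -(n:ℝ)}) = ∅ := by
      ext ω
      simp only [Set.mem_iInter, Set.mem_empty_iff_false, iff_false, not_forall,
        Set.mem_setOf_eq, not_le]
      obtain ⟨n, hn⟩ := exists_nat_gt (-X ω)
      exact ⟨n, by linarith⟩
    have h1 : Tendsto (fun n : ℕ => P {ω | X ω ≤ -(n:ℝ)}) atTop (nhds 0) := by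
      have := tendsto_measure_iInter_atTop (μ := P)
        (s := fun n : ℕ => {ω | X ω ≤ -(n:ℝ)})
        (fun n => (hX measurableSet_Iic).nullMeasurableSet) hanti ⟨0, measure_ne_top P _⟩
      rwa [hI, measure_empty] at this
    have h2 : Tendsto (fun n : ℕ => F (-(n:ℝ))) atTop (nhds 0) := by
      have := (ENNReal.tendsto_toReal (by norm_num : (0:ENNReal) ≠ ⊤)).comp h1
      simp at this; exact this
    obtain ⟨n, hn⟩ := (h2.eventually (eventually_lt_nhds hq0)).exists
    refine ⟨-(n:ℝ), fun z hz => ?_⟩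
    by_contra hc
    push_neg at hc
    exact absurd (le_trans hz (hFmono hc.le)) (not_le.mpr hn)
  set m : ℝ := sInf S with hmdef
  have hmS : m ∈ S := (isClosed_le continuous_const hXcont).csInf_mem hSne hSbd
  -- h m is a member of the set defining the LHS
  have hmem : q ≤ (P {ω | h (X ω) ≤ h m}).toReal := by
    refine le_trans hmS (ENNReal.toReal_mono (measure_ne_top P _)
      (measure_mono fun ω hw => hh hw))
  -- h m is a lower bound
  have hlb : ∀ z, q ≤ (P {ω | h (X ω) ≤ z}).toReal → h m ≤ z := by
    intro z hz
    by_contra hc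
    push_neg at hc
    set A : Set ℝ := {x | h x ≤ z} with hAdef
    have hAne : A.Nonempty := by
      by_contra hA
      rw [Set.not_nonempty_iff_eq_empty] at hA
      have : {ω | h (X ω) ≤ z} = ∅ := by
        ext ω
        simp only [Set.mem_setOf_eq, Set.mem_empty_iff_false, iff_false]
        intro hcontra
        exact Set.notMem_empty (X ω) (hA ▸ (hcontra : X ω ∈ A))
      rw [this] at hz
      simp at hz
      linarith
    have hAbd : BddAbove A := by
      refine ⟨m, fun x hx => ?_⟩
      by_contra hxm
      push_neg at hxm
      exact absurd (le_trans (hh hxm.le) hx) (not_le.mpr hc)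
    set t : ℝ := sSup A with htdef
    have htm : t ≤ m := csSup_le hAne fun x hx => by
      by_contra hxm
      push_neg at hxm
      exact absurd (le_trans (hh hxm.le) hx) (not_le.mpr hc)
    have htS : t ∈ S := by
      refine le_trans hz (ENNReal.toReal_mono (measure_ne_top P _)
        (measure_mono fun ω hw => le_csSup hAbd hw))
    have hmt : m ≤ t := csInf_le hSbd htS
    have htm' : t = m := le_antisymm htm hmt
    -- h m = sSup (h '' A) ≤ z
    have hsup : h m = sSup (h '' A) := by
      rw [← htm']
      exact hh.map_csSup_of_continuousAt (hhc.continuousAt) hAne hAbd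
    have : h m ≤ z := by
      rw [hsup]
      exact csSup_le (hAne.image h) fun y ⟨x, hx, hxy⟩ => hxy ▸ hx
    exact absurd this (not_le.mpr hc)
  -- conclude
  unfold VaR
  refine le_antisymm (csInf_le ⟨h m, fun z hz => hlb z hz⟩ hmem)
    (le_csInf ⟨h m, hmem⟩ fun z hz => hlb z hz)

/-- For the comonotonic sum of two continuous random variables, i.e. `Y = g(X)` with `g`
nondecreasing and continuous, VaR is additive:
`VaR_q(X + Y) = VaR_q(X) + VaR_q(Y)` for all `q ∈ (0,1)`. -/
theorem comonotonic_VaR_additive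
    {Ω : Type*} [MeasurableSpace Ω] (P : Measure Ω) [IsProbabilityMeasure P]
    (X : Ω → ℝ) (hX : Measurable X)
    (hXcont : Continuous fun x : ℝ => (P {ω | X ω ≤ x}).toReal)
    (g : ℝ → ℝ) (hg : Monotone g) (hgcont : Continuous g)
    (Y : Ω → ℝ) (hYdef : Y = fun ω => g (X ω))
    (hYcont : Continuous fun x : ℝ => (P {ω | Y ω ≤ x}).toReal) :
    ∀ q ∈ Set.Ioo (0:ℝ) 1,
      VaR P q (fun ω => X ω + Y ω) = VaR P q X + VaR P q Y := by
  rintro q ⟨hq0, hq1⟩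
  subst hYdef
  have hY : VaR P q (fun ω => g (X ω)) = g (VaR P q X) :=
    VaR_comp P X hX hXcont hq0 hq1 g hg hgcont
  have hXY : VaR P q (fun ω => X ω + g (X ω)) = (VaR P q X) + g (VaR P q X) :=
    VaR_comp P X hX hXcont hq0 hq1 (fun x => x + g x) (monotone_id.add hg)
      (continuous_id.add hgcont)
  rw [hY, hXY]
end

section
/- For two i.i.d. Lévy(0, γ) random variables X, Y (α = 1/2, β = 1 stable), the sum X + Y is Lévy distributed with scale 4γ, and consequently VaR_q(X+Y) = 2(VaR_q(X) + VaR_q(Y)) for every q ∈ (0,1): the VaR of the sum is strictly superadditive with superadditivity ratio SR = 2. -/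
open MeasureTheory ProbabilityTheory Real
open scoped Pointwise

/-- Density of the Lévy distribution with location `δ` and scale `γ`. -/
noncomputable def levyDensity (δ γ x : ℝ) : ℝ :=
  if δ < x then
    Real.sqrt (γ / (2 * Real.pi)) * (x - δ) ^ (-(3:ℝ)/2) * Real.exp (-γ / (2 * (x - δ)))
  else 0

namespace LevyAux

open Set

lemma levy_eq (γ x : ℝ) : levyDensity 0 γ x =
    if 0 < x then Real.sqrt (γ / (2 * π)) * x ^ (-(3:ℝ)/2) * Real.exp (-γ / (2 * x)) else 0 := by
  simp [levyDensity]

lemma levy_nonneg (γ x : ℝ) : 0 ≤ levyDensity 0 γ x := by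
  rw [levy_eq]; split
  · positivity
  · exact le_rfl

lemma levy_of_nonpos (γ : ℝ) {x : ℝ} (hx : x ≤ 0) : levyDensity 0 γ x = 0 := by
  rw [levy_eq, if_neg (not_lt.2 hx)]

lemma levy_measurable (γ : ℝ) : Measurable (levyDensity 0 γ) := by
  rw [funext (levy_eq γ)]
  exact Measurable.ite measurableSet_Ioi (by fun_prop) measurable_const

lemma rpow_neg_three_half {x : ℝ} (hx : 0 < x) :
    x ^ (-(3:ℝ)/2) = (Real.sqrt x ^ 3)⁻¹ := by
  have h1 : x ^ ((3:ℝ)/2) = Real.sqrt x ^ 3 := by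
    rw [show ((3:ℝ)/2) = (1/2) * (3:ℕ) by norm_num, Real.rpow_mul hx.le, ← Real.sqrt_eq_rpow,
      Real.rpow_natCast]
  rw [show (-(3:ℝ)/2) = -((3:ℝ)/2) by norm_num, Real.rpow_neg hx.le, h1]

lemma eq_of_sq_eq {a b : ℝ} (ha : 0 ≤ a) (hb : 0 ≤ b) (h : a ^ 2 = b ^ 2) : a = b := by
  nlinarith

theorem lintegral_image_eq_lintegral_abs_deriv_mul {s : Set ℝ} {f f' : ℝ → ℝ}
    (hs : MeasurableSet s) (hf' : ∀ x ∈ s, HasDerivWithinAt f (f' x) s x)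
    (hf : Set.InjOn f s) (g : ℝ → ENNReal) :
    ∫⁻ x in f '' s, g x = ∫⁻ x in s, ENNReal.ofReal |f' x| * g (f x) := by
  simpa only [ContinuousLinearMap.det_toSpanSingleton] using
    lintegral_image_eq_lintegral_abs_det_fderiv_mul volume hs
      (fun x hx => (hf' x hx).hasFDerivWithinAt) hf g

noncomputable def phi (u t : ℝ) : ℝ := (u - 2*t) / Real.sqrt (t * (u - t))
noncomputable def phi' (u t : ℝ) : ℝ := -(u^2 / (2 * Real.sqrt (t * (u - t)) ^ 3))

lemma hasDerivAt_phi {u : ℝ} (hu : 0 < u) {t : ℝ} (ht : t ∈ Ioo 0 u) :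
    HasDerivAt (phi u) (phi' u t) t := by
  obtain ⟨ht0, htu⟩ := ht
  have hA : 0 < t * (u - t) := mul_pos ht0 (by linarith)
  have hs : 0 < Real.sqrt (t * (u - t)) := Real.sqrt_pos.2 hA
  have hs2 : Real.sqrt (t * (u - t)) ^ 2 = t * (u - t) := Real.sq_sqrt hA.le
  have hq : HasDerivAt (fun t => t * (u - t)) (u - 2*t) t := by
    have := (hasDerivAt_id t).mul ((hasDerivAt_const t u).sub (hasDerivAt_id t))
    simp only [id_eq] at this
    exact this.congr_deriv (by simp only [Pi.sub_apply, id_eq]; ring)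
  have hsd : HasDerivAt (fun t => Real.sqrt (t * (u - t)))
      ((u - 2*t) / (2 * Real.sqrt (t * (u - t)))) t := by
    have := (Real.hasDerivAt_sqrt hA.ne').comp t hq
    exact this.congr_deriv (by ring)
  have h2 : HasDerivAt (fun t : ℝ => u - 2*t) (-2) t := by
    have := (hasDerivAt_const t u).sub ((hasDerivAt_const t (2:ℝ)).mul (hasDerivAt_id t))
    simp only [id_eq] at this
    exact this.congr_deriv (by ring)
  have hdiv := h2.div hsd hs.ne'
  refine hdiv.congr_deriv ?_
  rw [phi']
  have key : ∀ s : ℝ, s ≠ 0 → s^2 = t*(u-t) →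
      (-2 * s - (u - 2*t) * ((u - 2*t) / (2*s))) / s^2 = -(u^2 / (2 * s^3)) := by
    intro s hsne hs2
    field_simp
    linear_combination (-4) * hs2
  exact key _ hs.ne' hs2

lemma strictAntiOn_phi {u : ℝ} (hu : 0 < u) : StrictAntiOn (phi u) (Ioo 0 u) := by
  apply strictAntiOn_of_deriv_neg (convex_Ioo 0 u)
  · exact fun x hx => (hasDerivAt_phi hu hx).continuousAt.continuousWithinAt
  · intro x hx
    rw [interior_Ioo] at hx
    rw [(hasDerivAt_phi hu hx).deriv]
    obtain ⟨hx0, hxu⟩ := hx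
    have hA : 0 < x * (u - x) := mul_pos hx0 (by linarith)
    have hs : 0 < Real.sqrt (x * (u - x)) := Real.sqrt_pos.2 hA
    have : 0 < u^2 / (2 * Real.sqrt (x * (u - x)) ^ 3) := by positivity
    simpa [phi'] using this

lemma image_phi {u : ℝ} (hu : 0 < u) : phi u '' Ioo 0 u = Set.univ := by
  apply Set.eq_univ_of_forall
  intro w
  set r := Real.sqrt (w^2 + 4) with hr_def
  have hr : 0 < r := Real.sqrt_pos.2 (by positivity)
  have hr2 : r^2 = w^2 + 4 := Real.sq_sqrt (by positivity)
  have hwr : |w| < r := by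
    rw [hr_def, show |w| = Real.sqrt (w^2) by rw [Real.sqrt_sq_eq_abs]]
    exact Real.sqrt_lt_sqrt (by positivity) (by linarith)
  have hwr1 : w / r < 1 := by
    rw [div_lt_one hr]; exact lt_of_le_of_lt (le_abs_self w) hwr
  have hwr2 : -1 < w / r := by
    rw [lt_div_iff₀ hr]
    have := (abs_lt.1 hwr).1
    linarith
  set t := u/2 * (1 - w / r) with ht_def
  have htmem : t ∈ Ioo 0 u := by
    constructor
    · exact mul_pos (by linarith) (by linarith)
    · have h1 : 1 - w/r < 2 := by linarith
      calc t = u/2 * (1 - w/r) := ht_def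
        _ < u/2 * 2 := by apply mul_lt_mul_of_pos_left h1 (by linarith)
        _ = u := by ring
  refine ⟨t, htmem, ?_⟩
  have hrne : r ≠ 0 := hr.ne'
  have h1 : t * (u - t) = (u / r)^2 := by
    rw [ht_def]; field_simp; linear_combination hr2
  have h2 : Real.sqrt (t * (u - t)) = u / r := by
    rw [h1, Real.sqrt_sq (by positivity)]
  have h3 : u - 2 * t = u * w / r := by
    rw [ht_def]; field_simp; ring
  rw [phi, h2, h3]
  field_simp

lemma pointwise_eq {γ u t : ℝ} (hγ : 0 < γ) (hu : 0 < u) (ht : t ∈ Ioo 0 u) :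
    |phi' u t| * (γ/(π*u^2) * Real.exp (-(2*γ)/u) * Real.exp (-(γ/(2*u)) * (phi u t)^2))
      = levyDensity 0 γ t * levyDensity 0 γ (u - t) := by
  obtain ⟨ht0, htu⟩ := ht
  have hut : 0 < u - t := by linarith
  have hA : 0 < t * (u - t) := mul_pos ht0 hut
  set s := Real.sqrt (t * (u - t)) with hs_def
  have hs : 0 < s := Real.sqrt_pos.2 hA
  have hs2 : s ^ 2 = t * (u - t) := Real.sq_sqrt hA.le
  have habs : |phi' u t| = u^2 / (2 * s^3) := by
    rw [phi', abs_neg, abs_of_nonneg (by positivity)]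
  have hphisq : (phi u t)^2 = (u - 2*t)^2 / (t * (u - t)) := by
    rw [phi, div_pow, Real.sq_sqrt hA.le]
  have hsplit : (Real.sqrt t ^ 3)⁻¹ * (Real.sqrt (u - t) ^ 3)⁻¹ = (s^3)⁻¹ := by
    rw [← mul_inv, ← mul_pow, ← Real.sqrt_mul ht0.le]
  have hEexp : (-(2*γ)/u) + (-(γ/(2*u)) * ((u - 2*t)^2 / (t * (u - t))))
      = (-γ/(2*t)) + (-γ/(2*(u - t))) := by
    field_simp
    ring
  have hc2 : Real.sqrt (γ/(2*π)) ^ 2 = γ/(2*π) := Real.sq_sqrt (by positivity)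
  rw [levy_eq, if_pos ht0, levy_eq, if_pos hut, rpow_neg_three_half ht0,
    rpow_neg_three_half hut, habs, hphisq]
  have hconst : u^2 / (2 * s^3) * (γ/(π*u^2)) = γ/(2*π) * (s^3)⁻¹ := by
    field_simp
  calc u^2 / (2 * s^3) * (γ/(π*u^2) * Real.exp (-(2*γ)/u) *
        Real.exp (-(γ/(2*u)) * ((u - 2*t)^2 / (t * (u - t)))))
      = (u^2 / (2 * s^3) * (γ/(π*u^2))) *
        Real.exp ((-(2*γ)/u) + (-(γ/(2*u)) * ((u - 2*t)^2 / (t * (u - t))))) := by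
        rw [Real.exp_add]; ring
    _ = (γ/(2*π) * (s^3)⁻¹) * Real.exp ((-γ/(2*t)) + (-γ/(2*(u - t)))) := by
        rw [hconst, hEexp]
    _ = Real.sqrt (γ/(2*π)) * (Real.sqrt t ^ 3)⁻¹ * Real.exp (-γ/(2*t)) *
        (Real.sqrt (γ/(2*π)) * (Real.sqrt (u - t) ^ 3)⁻¹ * Real.exp (-γ/(2*(u - t)))) := by
        rw [Real.exp_add]
        linear_combination (-(γ/(2*π)) * (Real.exp (-γ/(2*t)) * Real.exp (-γ/(2*(u - t))))) * hsplit
          + (-((Real.sqrt t ^ 3)⁻¹ * (Real.sqrt (u - t) ^ 3)⁻¹) *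
              (Real.exp (-γ/(2*t)) * Real.exp (-γ/(2*(u - t))))) * hc2

lemma gauss_const_eq {γ u : ℝ} (hγ : 0 < γ) (hu : 0 < u) :
    γ/(π*u^2) * Real.exp (-(2*γ)/u) * Real.sqrt (π/(γ/(2*u)))
      = levyDensity 0 (4*γ) u := by
  rw [levy_eq, if_pos hu]
  have hexp : Real.exp (-(2*γ)/u) = Real.exp (-(4*γ)/(2*u)) := by
    congr 1; ring
  have hmain : γ/(π*u^2) * Real.sqrt (π/(γ/(2*u))) = Real.sqrt (4*γ/(2*π)) * u ^ (-(3:ℝ)/2) := by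
    have hX : (0:ℝ) ≤ π/(γ/(2*u)) := by positivity
    have hY : (0:ℝ) ≤ 4*γ/(2*π) := by positivity
    apply eq_of_sq_eq (by positivity) (by positivity)
    have hru : (u ^ (-(3:ℝ)/2))^2 = (u^3)⁻¹ := by
      rw [rpow_neg_three_half hu, inv_pow]
      congr 1
      calc (Real.sqrt u ^ 3)^2 = (Real.sqrt u ^ 2)^3 := by ring
        _ = u^3 := by rw [Real.sq_sqrt hu.le]
    rw [mul_pow, mul_pow, Real.sq_sqrt hX, Real.sq_sqrt hY, hru]
    field_simp
    ring
  calc γ/(π*u^2) * Real.exp (-(2*γ)/u) * Real.sqrt (π/(γ/(2*u)))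
      = (γ/(π*u^2) * Real.sqrt (π/(γ/(2*u)))) * Real.exp (-(2*γ)/u) := by ring
    _ = Real.sqrt (4*γ/(2*π)) * u ^ (-(3:ℝ)/2) * Real.exp (-(4*γ)/(2*u)) := by
        rw [hmain, hexp]

lemma key_conv (γ : ℝ) (hγ : 0 < γ) (u : ℝ) :
    ∫⁻ t : ℝ, ENNReal.ofReal (levyDensity 0 γ t * levyDensity 0 γ (u - t)) =
      ENNReal.ofReal (levyDensity 0 (4*γ) u) := by
  rcases le_or_gt u 0 with hu | hu
  · have hzero : ∀ t : ℝ, levyDensity 0 γ t * levyDensity 0 γ (u - t) = 0 := by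
      intro t
      rcases le_or_gt t 0 with h | h
      · rw [levy_of_nonpos γ h, zero_mul]
      · rw [levy_of_nonpos γ (by linarith : u - t ≤ 0), mul_zero]
    simp [hzero, levy_of_nonpos _ hu]
  · set g : ℝ → ENNReal := fun w =>
      ENNReal.ofReal (γ/(π*u^2) * Real.exp (-(2*γ)/u) * Real.exp (-(γ/(2*u)) * w^2)) with hg_def
    have hsupp : Function.support
        (fun t => ENNReal.ofReal (levyDensity 0 γ t * levyDensity 0 γ (u - t))) ⊆ Ioo 0 u := by
      intro t ht
      simp only [Function.mem_support] at ht
      by_contra hmem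
      rw [Set.mem_Ioo, not_and_or] at hmem
      apply ht
      rcases hmem with h | h
      · rw [levy_of_nonpos γ (le_of_not_gt h), zero_mul, ENNReal.ofReal_zero]
      · have h2 : u - t ≤ 0 := by linarith [le_of_not_gt h]
        rw [levy_of_nonpos γ h2, mul_zero, ENNReal.ofReal_zero]
    rw [← setLIntegral_eq_of_support_subset hsupp]
    have hstep : ∫⁻ t in Ioo 0 u, ENNReal.ofReal (levyDensity 0 γ t * levyDensity 0 γ (u - t))
        = ∫⁻ t in Ioo 0 u, ENNReal.ofReal |phi' u t| * g (phi u t) := by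
      apply setLIntegral_congr_fun measurableSet_Ioo
      intro t ht
      rw [hg_def]; beta_reduce; rw [← ENNReal.ofReal_mul (abs_nonneg _), pointwise_eq hγ hu ht]
    rw [hstep, ← lintegral_image_eq_lintegral_abs_deriv_mul measurableSet_Ioo
        (fun x hx => (hasDerivAt_phi hu hx).hasDerivWithinAt)
        ((strictAntiOn_phi hu).injOn) g, image_phi hu, Measure.restrict_univ]
    have hb : 0 < γ/(2*u) := by positivity
    have hint : Integrable (fun x : ℝ =>
        γ/(π*u^2) * Real.exp (-(2*γ)/u) * Real.exp (-(γ/(2*u)) * x^2)) :=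
      (integrable_exp_neg_mul_sq hb).const_mul _
    have hpos : (0 : ℝ → ℝ) ≤ᵐ[(volume : Measure ℝ)] fun x : ℝ =>
        γ/(π*u^2) * Real.exp (-(2*γ)/u) * Real.exp (-(γ/(2*u)) * x^2) := by
      apply Filter.Eventually.of_forall
      intro x
      simp only [Pi.zero_apply]
      positivity
    rw [hg_def]
    rw [← ofReal_integral_eq_lintegral_ofReal hint hpos]
    congr 1
    rw [MeasureTheory.integral_const_mul, integral_gaussian]
    exact gauss_const_eq hγ hu

end LevyAux

/-- For two i.i.d. Lévy(0, γ) random variables `X`, `Y`, the sum `X + Y` is Lévy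
distributed with scale `4γ`, and consequently
`VaR_q(X+Y) = 2 (VaR_q(X) + VaR_q(Y))` for every `q ∈ (0,1)`: the VaR of the sum is
strictly superadditive with superadditivity ratio `SR = 2`. -/
theorem levy_sum_superadditive
    {Ω : Type*} [MeasurableSpace Ω] (P : Measure Ω) [IsProbabilityMeasure P]
    (X Y : Ω → ℝ) (hX : Measurable X) (hY : Measurable Y)
    (hindep : IndepFun X Y P) (γ : ℝ) (hγ : 0 < γ)
    (hXdist : Measure.map X P = volume.withDensity (fun x => ENNReal.ofReal (levyDensity 0 γ x)))
    (hYdist : Measure.map Y P = volume.withDensity (fun x => ENNReal.ofReal (levyDensity 0 γ x))) :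
    Measure.map (fun ω => X ω + Y ω) P
        = volume.withDensity (fun x => ENNReal.ofReal (levyDensity 0 (4 * γ) x)) ∧
    ∀ q ∈ Set.Ioo (0:ℝ) 1,
      VaR P q (fun ω => X ω + Y ω) = 2 * (VaR P q X + VaR P q Y) := by
  classical
  set f1 : ℝ → ENNReal := fun x => ENNReal.ofReal (levyDensity 0 γ x) with hf1
  set f4 : ℝ → ENNReal := fun x => ENNReal.ofReal (levyDensity 0 (4 * γ) x) with hf4
  have hf1m : Measurable f1 := ENNReal.measurable_ofReal.comp (LevyAux.levy_measurable γ)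
  have hf4m : Measurable f4 := ENNReal.measurable_ofReal.comp (LevyAux.levy_measurable (4*γ))
  -- the convolution identity
  have hconv : Measure.map (fun p : ℝ × ℝ => p.1 + p.2)
      ((volume.withDensity f1).prod (volume.withDensity f1)) = volume.withDensity f4 := by
    ext s hs
    rw [Measure.map_apply measurable_add hs, Measure.prod_apply (measurable_add hs)]
    have hinner : ∀ x : ℝ, (volume.withDensity f1)
        (Prod.mk x ⁻¹' ((fun p : ℝ × ℝ => p.1 + p.2) ⁻¹' s))
        = ∫⁻ y, s.indicator (fun _ => (1:ENNReal)) y * f1 (y - x) := by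
      intro x
      have hpre : (Prod.mk x ⁻¹' ((fun p : ℝ × ℝ => p.1 + p.2) ⁻¹' s))
          = (fun y => x + y) ⁻¹' s := rfl
      have hsx : MeasurableSet ((fun y : ℝ => x + y) ⁻¹' s) :=
        hs.preimage (measurable_const_add x)
      rw [hpre, withDensity_apply _ hsx, ← lintegral_indicator hsx]
      have e1 : ∀ y : ℝ, ((fun y : ℝ => x + y) ⁻¹' s).indicator f1 y
          = s.indicator (fun _ => (1:ENNReal)) (x + y) * f1 y := by
        intro y
        by_cases h : x + y ∈ s <;> simp [Set.indicator, h]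
      rw [lintegral_congr e1]
      have hshift := lintegral_add_right_eq_self (μ := volume)
        (fun y => s.indicator (fun _ => (1:ENNReal)) y * f1 (y - x)) x
      rw [← hshift]
      apply lintegral_congr
      intro y
      show s.indicator _ (x + y) * f1 y
          = s.indicator (fun _ => (1:ENNReal)) (y + x) * f1 (y + x - x)
      rw [add_sub_cancel_right, add_comm x y]
    rw [lintegral_congr hinner]
    have hunc : Measurable (Function.uncurry fun x y : ℝ =>
        s.indicator (fun _ => (1:ENNReal)) y * f1 (y - x)) := by
      apply Measurable.mul
      · exact (measurable_const.indicator hs).comp measurable_snd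
      · exact hf1m.comp (measurable_snd.sub measurable_fst)
    have hGm : Measurable fun x : ℝ =>
        ∫⁻ y, s.indicator (fun _ => (1:ENNReal)) y * f1 (y - x) :=
      Measurable.lintegral_prod_right hunc
    rw [lintegral_withDensity_eq_lintegral_mul volume hf1m hGm]
    have hmove : ∀ x : ℝ, (f1 * fun x =>
        ∫⁻ y, s.indicator (fun _ => (1:ENNReal)) y * f1 (y - x)) x
        = ∫⁻ y, f1 x * (s.indicator (fun _ => (1:ENNReal)) y * f1 (y - x)) := by
      intro x
      show f1 x * _ = _
      have hmeas : Measurable fun y : ℝ => s.indicator (fun _ => (1:ENNReal)) y * f1 (y - x) :=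
        (measurable_const.indicator hs).mul (hf1m.comp (measurable_id.sub measurable_const))
      rw [lintegral_const_mul _ hmeas]
    rw [lintegral_congr hmove]
    have hunc2 : AEMeasurable (Function.uncurry fun x y : ℝ =>
        f1 x * (s.indicator (fun _ => (1:ENNReal)) y * f1 (y - x)))
        ((volume : Measure ℝ).prod volume) := by
      apply Measurable.aemeasurable
      exact (hf1m.comp measurable_fst).mul hunc
    rw [lintegral_lintegral_swap hunc2]
    have hfin : ∀ y : ℝ, ∫⁻ x, f1 x * (s.indicator (fun _ => (1:ENNReal)) y * f1 (y - x))
        = s.indicator f4 y := by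
      intro y
      have e2 : ∀ x : ℝ, f1 x * (s.indicator (fun _ => (1:ENNReal)) y * f1 (y - x))
          = s.indicator (fun _ => (1:ENNReal)) y * (f1 x * f1 (y - x)) := by
        intro x; ring
      rw [lintegral_congr e2, lintegral_const_mul _ (by fun_prop :
        Measurable fun x : ℝ => f1 x * f1 (y - x))]
      have e3 : ∀ x : ℝ, f1 x * f1 (y - x)
          = ENNReal.ofReal (levyDensity 0 γ x * levyDensity 0 γ (y - x)) := by
        intro x
        rw [hf1, ENNReal.ofReal_mul (LevyAux.levy_nonneg γ x)]
      rw [lintegral_congr e3, LevyAux.key_conv γ hγ y]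
      by_cases h : y ∈ s <;> simp [Set.indicator, h, hf4]
    rw [lintegral_congr hfin, lintegral_indicator hs, ← withDensity_apply _ hs]
  -- the law of the sum
  have hmap2 : Measure.map (fun ω => (X ω, Y ω)) P
      = (Measure.map X P).prod (Measure.map Y P) :=
    (indepFun_iff_map_prod_eq_prod_map_map hX.aemeasurable hY.aemeasurable).mp hindep
  have hfirst : Measure.map (fun ω => X ω + Y ω) P = volume.withDensity f4 := by
    have hcomp : (fun ω => X ω + Y ω)
        = (fun p : ℝ × ℝ => p.1 + p.2) ∘ (fun ω => (X ω, Y ω)) := rfl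
    rw [hcomp, ← Measure.map_map measurable_add (hX.prodMk hY), hmap2, hXdist, hYdist, hconv]
  refine ⟨hfirst, ?_⟩
  -- scaling of the density
  have hlevy_scale : ∀ x : ℝ, 4 * levyDensity 0 (4*γ) (4*x) = levyDensity 0 γ x := by
    intro x
    rcases le_or_gt x 0 with hx | hx
    · rw [LevyAux.levy_of_nonpos _ hx, LevyAux.levy_of_nonpos _ (by linarith : 4*x ≤ 0), mul_zero]
    · have h4x : 0 < 4*x := by linarith
      rw [LevyAux.levy_eq, if_pos h4x, LevyAux.levy_eq, if_pos hx]
      have hsq : Real.sqrt (4*γ/(2*π)) = 2 * Real.sqrt (γ/(2*π)) := by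
        rw [show 4*γ/(2*π) = 4*(γ/(2*π)) by ring, Real.sqrt_mul (by norm_num) _,
          show Real.sqrt 4 = 2 by
            rw [show (4:ℝ) = 2^2 by norm_num, Real.sqrt_sq (by norm_num : (0:ℝ) ≤ 2)]]
      have hrp : (4*x) ^ (-(3:ℝ)/2) = (8 * Real.sqrt x ^ 3)⁻¹ := by
        rw [LevyAux.rpow_neg_three_half h4x, Real.sqrt_mul (by norm_num : (0:ℝ) ≤ 4) x,
          show Real.sqrt 4 = 2 by
            rw [show (4:ℝ) = 2^2 by norm_num, Real.sqrt_sq (by norm_num : (0:ℝ) ≤ 2)],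
          show (2 * Real.sqrt x)^3 = 8 * Real.sqrt x ^ 3 by ring]
      have hexp : Real.exp (-(4*γ)/(2*(4*x))) = Real.exp (-γ/(2*x)) := by
        congr 1; ring
      rw [hsq, hrp, hexp, LevyAux.rpow_neg_three_half hx, mul_inv]
      ring
  -- scaling of the cdf
  have hscale : ∀ z : ℝ, (volume.withDensity f4) (Set.Iic z)
      = (volume.withDensity f1) (Set.Iic (z/4)) := by
    intro z
    rw [withDensity_apply _ measurableSet_Iic, withDensity_apply _ measurableSet_Iic]
    have himg : (fun x : ℝ => 4*x) '' Set.Iic (z/4) = Set.Iic z := by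
      ext w
      simp only [Set.mem_image, Set.mem_Iic]
      constructor
      · rintro ⟨x, hx, rfl⟩; linarith
      · intro hw; exact ⟨w/4, by linarith, by ring⟩
    have hder : ∀ x ∈ Set.Iic (z/4),
        HasDerivWithinAt (fun x : ℝ => 4*x) ((fun _ : ℝ => (4:ℝ)) x) (Set.Iic (z/4)) x := by
      intro x _
      simpa using ((hasDerivAt_id x).const_mul (4:ℝ)).hasDerivWithinAt
    have hinj : Set.InjOn (fun x : ℝ => 4*x) (Set.Iic (z/4)) := by
      intro a _ b _ hab
      have : (4:ℝ) * a = 4 * b := hab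
      linarith
    rw [← himg, LevyAux.lintegral_image_eq_lintegral_abs_deriv_mul
      measurableSet_Iic hder hinj f4]
    apply setLIntegral_congr_fun measurableSet_Iic
    intro x _
    rw [show |(4:ℝ)| = 4 by norm_num, hf4, hf1]; beta_reduce; rw [
      ← ENNReal.ofReal_mul (by norm_num : (0:ℝ) ≤ 4), hlevy_scale x]
  -- identify the quantile sets
  have hXev : ∀ z : ℝ, P {ω | X ω ≤ z} = (volume.withDensity f1) (Set.Iic z) := by
    intro z
    rw [← hXdist, Measure.map_apply hX measurableSet_Iic]
    rfl
  have hYev : ∀ z : ℝ, P {ω | Y ω ≤ z} = (volume.withDensity f1) (Set.Iic z) := by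
    intro z
    rw [← hYdist, Measure.map_apply hY measurableSet_Iic]
    rfl
  have hSev : ∀ z : ℝ, P {ω | X ω + Y ω ≤ z} = (volume.withDensity f1) (Set.Iic (z/4)) := by
    intro z
    have := Measure.map_apply (μ := P) (f := fun ω => X ω + Y ω) (hX.add hY) (measurableSet_Iic (a := z))
    rw [hfirst] at this
    have hpre : (fun ω => X ω + Y ω) ⁻¹' Set.Iic z = {ω | X ω + Y ω ≤ z} := rfl
    rw [hpre] at this
    rw [← this, hscale]
  intro q _
  set S : Set ℝ := {z : ℝ | q ≤ ((volume.withDensity f1) (Set.Iic z)).toReal} with hS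
  have hVX : VaR P q X = sInf S := by
    unfold VaR
    congr 1
    ext z
    rw [Set.mem_setOf_eq, hXev z, hS, Set.mem_setOf_eq]
  have hVY : VaR P q Y = sInf S := by
    unfold VaR
    congr 1
    ext z
    rw [Set.mem_setOf_eq, hYev z, hS, Set.mem_setOf_eq]
  have hVS : VaR P q (fun ω => X ω + Y ω) = sInf ((4:ℝ) • S) := by
    unfold VaR
    congr 1
    ext z
    simp only [Set.mem_setOf_eq, hSev z, Set.mem_smul_set]
    constructor
    · intro h
      refine ⟨z/4, h, ?_⟩
      rw [smul_eq_mul]; ring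
    · rintro ⟨w, hw, rfl⟩
      have hw' : q ≤ ((volume.withDensity f1) (Set.Iic w)).toReal := hw
      simpa [show ((4:ℝ) • w)/4 = w by rw [smul_eq_mul]; ring] using hw'
  rw [hVX, hVY, hVS, Real.sInf_smul_of_nonneg (by norm_num : (0:ℝ) ≤ 4), smul_eq_mul]
  ring
end
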